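/- For every p ∈ [1,∞] there is a constant K > 0 (one may take K = 3) such that for all natural numbers m ≤ n and all real numbers a_1, …, a_n one has ‖∑_{i=1}^m a_i φ_i‖_{L^p[0,1]} ≤ K · ‖∑_{i=1}^n a_i φ_i‖_{L^p[0,1]}. In other words, the Rademacher chaos of order 2, ordered according to the enumeration φ, satisfies the basic-sequence inequality in L^p[0,1] with a constant independent of m, n and the coefficients. -/

import Mathlib

open MeasureTheory ENNReal

attribute [local instance] Classical.propDecidable

/-- The Rademacher functions on `[0,1]`: `r k t = (-1)^⌊2^(k-1) t⌋` (for `k ≥ 1`). -/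
noncomputable def rademacher (k : ℕ) (t : ℝ) : ℝ :=
  (-1 : ℝ) ^ ⌊(2 : ℝ) ^ (k - 1) * t⌋

/-- The enumeration of the Rademacher chaos of order 2:
`φ_{(j−1)(j−2)/2 + i} = r_i r_j` for `1 ≤ i < j`. -/
noncomputable def chaosEnum (m : ℕ) : ℝ → ℝ :=
  if h : ∃ p : ℕ × ℕ, 1 ≤ p.1 ∧ p.1 < p.2 ∧ (p.2 - 1) * (p.2 - 2) / 2 + p.1 = m then
    fun t => rademacher h.choose.1 t * rademacher h.choose.2 t
  else 0

/-- Lebesgue measure on `[0,1]`. -/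
noncomputable def lebI : Measure ℝ := volume.restrict (Set.Icc (0 : ℝ) 1)

namespace ChaosAux

/-- triangle-style count: number of pairs with second coordinate < j -/
def T (j : ℕ) : ℕ := (j - 1) * (j - 2) / 2

/-- enumeration of pairs -/
def e (q : ℕ × ℕ) : ℕ := (q.2 - 1) * (q.2 - 2) / 2 + q.1

lemma e_def (q : ℕ × ℕ) : e q = T q.2 + q.1 := rfl

lemma T_succ {j : ℕ} (hj : 2 ≤ j) : T (j + 1) = T j + (j - 1) := by
  obtain ⟨k, rfl⟩ : ∃ k, j = k + 2 := ⟨j - 2, by omega⟩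
  show (k + 2) * (k + 1) / 2 = (k + 1) * k / 2 + (k + 1)
  have h : (k + 2) * (k + 1) = (k + 1) * k + (k + 1) * 2 := by ring
  rw [h, Nat.add_mul_div_right _ _ (by norm_num : 0 < 2)]

lemma T_mono : Monotone T := fun a b hab =>
  Nat.div_le_div_right (Nat.mul_le_mul (by omega) (by omega))

def goodPair (q : ℕ × ℕ) : Prop := 1 ≤ q.1 ∧ q.1 < q.2

lemma e_lt_e {q q' : ℕ × ℕ} (hq : goodPair q) (hq' : goodPair q') (h : q.2 < q'.2) :
    e q < e q' := by
  obtain ⟨h1, h2⟩ := hq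
  obtain ⟨h1', h2'⟩ := hq'
  have hT : T (q.2 + 1) ≤ T q'.2 := T_mono (by omega)
  have hs : T (q.2 + 1) = T q.2 + (q.2 - 1) := T_succ (by omega)
  have h3 : T q.2 + q.1 ≤ T (q.2 + 1) := by rw [hs]; omega
  rw [e_def, e_def]
  omega

lemma e_unique {q q' : ℕ × ℕ} (hq : goodPair q) (hq' : goodPair q') (h : e q = e q') :
    q = q' := by
  rcases lt_trichotomy q.2 q'.2 with hlt | heq | hgt
  · exact absurd h (by have := e_lt_e hq hq' hlt; omega)
  · have : q.1 = q'.1 := by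
      have := e_def q; have := e_def q'; rw [e_def, e_def, heq] at h; omega
    exact Prod.ext this heq
  · exact absurd h (by have := e_lt_e hq' hq hgt; omega)

lemma e_le_iff {q q' : ℕ × ℕ} (hq : goodPair q) (hq' : goodPair q') :
    e q ≤ e q' ↔ (q.2 < q'.2 ∨ (q.2 = q'.2 ∧ q.1 ≤ q'.1)) := by
  constructor
  · intro h
    rcases lt_trichotomy q.2 q'.2 with hlt | heq | hgt
    · exact Or.inl hlt
    · refine Or.inr ⟨heq, ?_⟩; rw [e_def, e_def, heq] at h; omega
    · exact absurd h (by have := e_lt_e hq' hq hgt; omega)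
  · rintro (hlt | ⟨heq, hle⟩)
    · exact (e_lt_e hq hq' hlt).le
    · rw [e_def, e_def, heq]; omega

lemma e_surj {k : ℕ} (hk : 1 ≤ k) : ∃ q : ℕ × ℕ, goodPair q ∧ e q = k := by
  induction k with
  | zero => omega
  | succ k ih =>
    rcases Nat.eq_or_lt_of_le hk with h1 | h1
    · exact ⟨(1, 2), ⟨le_refl 1, by norm_num⟩, by simp [e, ← h1]⟩
    · obtain ⟨⟨i, j⟩, ⟨hi, hij⟩, hek⟩ := ih (by omega)
      by_cases hlast : i + 1 < j
      · exact ⟨(i + 1, j), ⟨by omega, hlast⟩, by rw [e_def] at hek ⊢; simp at *; omega⟩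
      · have hij' : i = j - 1 := by omega
        refine ⟨(1, j + 1), ⟨le_refl 1, by omega⟩, ?_⟩
        rw [e_def] at hek ⊢
        have := T_succ (show 2 ≤ j by omega)
        simp at *
        omega

lemma e_pos {q : ℕ × ℕ} (hq : goodPair q) : 1 ≤ e q := by
  rw [e_def]; have := hq.1; omega

lemma snd_le {q : ℕ × ℕ} (hq : goodPair q) : q.2 ≤ e q + 1 := by
  have h2 : 2 ≤ q.2 := by have := hq.1; have := hq.2; omega
  have : q.2 - 2 ≤ T q.2 := by
    unfold T
    rcases Nat.lt_or_ge q.2 3 with h | h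
    · interval_cases h' : q.2 <;> simp
    · calc q.2 - 2 = 2 * (q.2 - 2) / 2 := by omega
        _ ≤ (q.2 - 1) * (q.2 - 2) / 2 := Nat.div_le_div_right (Nat.mul_le_mul_right _ (by omega))
  rw [e_def] at *
  have := hq.1
  omega

/-- canonical pair for an index -/
noncomputable def pr (k : ℕ) : ℕ × ℕ :=
  if h : ∃ q : ℕ × ℕ, goodPair q ∧ e q = k then h.choose else (0, 0)

lemma pr_spec {k : ℕ} (hk : 1 ≤ k) : goodPair (pr k) ∧ e (pr k) = k := by
  rw [pr, dif_pos (e_surj hk)]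
  exact (e_surj hk).choose_spec

lemma chaosEnum_eq {k : ℕ} (hk : 1 ≤ k) :
    chaosEnum k = fun t => rademacher (pr k).1 t * rademacher (pr k).2 t := by
  have hex : ∃ p : ℕ × ℕ, 1 ≤ p.1 ∧ p.1 < p.2 ∧ (p.2 - 1) * (p.2 - 2) / 2 + p.1 = k := by
    obtain ⟨q, hq, he⟩ := e_surj hk
    exact ⟨q, hq.1, hq.2, he⟩
  rw [chaosEnum, dif_pos hex]
  have hc := hex.choose_spec
  have : hex.choose = pr k := by
    refine e_unique ⟨hc.1, hc.2.1⟩ (pr_spec hk).1 ?_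
    rw [(pr_spec hk).2]; exact hc.2.2
  rw [this]

end ChaosAux

namespace ChaosAux

/-- flip of the `d`-th binary digit -/
noncomputable def flip (d : ℕ) (t : ℝ) : ℝ :=
  t + (-1 : ℝ) ^ ⌊(2 : ℝ) ^ d * t⌋ * ((2 : ℝ) ^ d)⁻¹

lemma two_pow_pos (d : ℕ) : (0:ℝ) < 2 ^ d := by positivity

/-- the key floor computation for digits below the flipped one -/
lemma floor_flip_lt {x : ℝ} {e : ℕ} (he : 1 ≤ e) :
    ⌊x + (-1 : ℝ) ^ ⌊(2:ℝ) ^ e * x⌋ * ((2:ℝ) ^ e)⁻¹⌋ = ⌊x⌋ := by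
  set E : ℝ := (2:ℝ) ^ e with hE
  have hEpos : (0:ℝ) < E := two_pow_pos e
  have hEne : E ≠ 0 := ne_of_gt hEpos
  set N : ℤ := ⌊E * x⌋ with hN
  set K : ℤ := ⌊x⌋ with hK
  have hinv : (0:ℝ) < E⁻¹ := inv_pos.2 hEpos
  have hEK_le : (2:ℤ) ^ e * K ≤ N := by
    rw [hN]
    apply Int.le_floor.2
    push_cast
    exact mul_le_mul_of_nonneg_left (Int.floor_le x) (le_of_lt hEpos)
  have hN_lt : N < 2 ^ e * (K + 1) := by
    rw [hN]
    apply Int.floor_lt.2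
    push_cast
    exact mul_lt_mul_of_pos_left (Int.lt_floor_add_one x) hEpos
  obtain ⟨e', rfl⟩ : ∃ e', e = e' + 1 := ⟨e - 1, by omega⟩
  have hevK : ∃ s : ℤ, (2:ℤ) ^ (e'+1) * K = 2 * s := ⟨2 ^ e' * K, by ring⟩
  have hevK1 : ∃ s : ℤ, (2:ℤ) ^ (e'+1) * (K + 1) = 2 * s := ⟨2 ^ e' * (K+1), by ring⟩
  have hKlex : (K:ℝ) ≤ x := Int.floor_le x
  have hxltK : x < (K:ℝ) + 1 := Int.lt_floor_add_one x
  rcases Int.even_or_odd N with hpar | hpar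
  · -- even: add
    have hsgn : (-1:ℝ) ^ N = 1 := hpar.neg_one_zpow
    rw [hsgn, one_mul]
    have h2 : N + 2 ≤ 2 ^ (e'+1) * (K + 1) := by
      rcases hpar with ⟨r, hr⟩
      rcases hevK1 with ⟨s, hs⟩
      omega
    have h3 : E * x + 1 < (N:ℝ) + 2 := by
      have := Int.lt_floor_add_one (E * x); rw [← hN] at this; linarith
    have h4 : ((N:ℝ) + 2) ≤ E * ((K:ℝ) + 1) := by
      have hc : ((N + 2 : ℤ) : ℝ) ≤ (((2:ℤ) ^ (e'+1) * (K + 1) : ℤ) : ℝ) := by exact_mod_cast h2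
      push_cast at hc
      rw [hE]; linarith
    have hup : x + E⁻¹ < (K:ℝ) + 1 := by
      have h6 : E * (x + E⁻¹) < E * ((K:ℝ) + 1) := by
        rw [mul_add, mul_inv_cancel₀ hEne]; linarith
      exact (mul_lt_mul_iff_right₀ hEpos).1 h6
    apply Int.floor_eq_iff.2
    constructor
    · linarith
    · push_cast; linarith
  · -- odd: subtract
    have hsgn : (-1:ℝ) ^ N = -1 := hpar.neg_one_zpow
    rw [hsgn]
    have h2 : 2 ^ (e'+1) * K + 1 ≤ N := by
      rcases hpar with ⟨r, hr⟩
      rcases hevK with ⟨s, hs⟩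
      omega
    have h3 : E * (K:ℝ) + 1 ≤ E * x := by
      have hc : (((2:ℤ) ^ (e'+1) * K + 1 : ℤ) : ℝ) ≤ (N : ℝ) := by exact_mod_cast h2
      have hNle : (N:ℝ) ≤ E * x := by
        have := Int.floor_le (E * x); rw [← hN] at this; exact this
      push_cast at hc
      rw [hE]; linarith
    have hdown : (K:ℝ) ≤ x + (-1) * E⁻¹ := by
      have h6 : E * ((K:ℝ) + E⁻¹) ≤ E * x := by
        rw [mul_add, mul_inv_cancel₀ hEne]; linarith
      have := (mul_le_mul_iff_right₀ hEpos).1 h6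
      linarith
    apply Int.floor_eq_iff.2
    constructor
    · exact hdown
    · push_cast; linarith

end ChaosAux

namespace ChaosAux

lemma floor_pow_flip {d : ℕ} (hd : 1 ≤ d) (j : ℕ) (t : ℝ) :
    (-1:ℝ) ^ ⌊(2:ℝ) ^ j * flip d t⌋
      = (if j = d then -1 else 1) * (-1:ℝ) ^ ⌊(2:ℝ) ^ j * t⌋ := by
  have hEne : ∀ r : ℕ, ((2:ℝ) ^ r) ≠ 0 := fun r => ne_of_gt (two_pow_pos r)
  rcases lt_trichotomy j d with hjd | hjd | hjd
  · -- j < d : floor unchanged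
    obtain ⟨e, rfl⟩ : ∃ e, d = e + j := ⟨d - j, by omega⟩
    have he : 1 ≤ e := by omega
    have hx : (2:ℝ) ^ j * flip (e + j) t
        = (2:ℝ)^j * t + (-1:ℝ) ^ ⌊(2:ℝ)^e * ((2:ℝ)^j * t)⌋ * ((2:ℝ)^e)⁻¹ := by
      rw [flip, pow_add]
      have h1 : (2:ℝ)^e * 2^j * t = (2:ℝ)^e * ((2:ℝ)^j * t) := by ring
      rw [h1]
      field_simp
    rw [hx, floor_flip_lt he, if_neg (by omega), one_mul]
  · -- j = d : sign flips
    subst hjd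
    have hx : (2:ℝ) ^ j * flip j t = (2:ℝ)^j * t + (-1:ℝ) ^ ⌊(2:ℝ)^j * t⌋ := by
      rw [flip]
      field_simp
    rw [hx, if_pos rfl]
    set N : ℤ := ⌊(2:ℝ)^j * t⌋ with hN
    rcases Int.even_or_odd N with hpar | hpar
    · have hsgn : (-1:ℝ) ^ N = 1 := hpar.neg_one_zpow
      rw [hsgn]
      have : (2:ℝ)^j * t + 1 = (2:ℝ)^j * t + ((1:ℤ):ℝ) := by norm_num
      rw [this, Int.floor_add_intCast, ← hN, zpow_add₀ (by norm_num : (-1:ℝ) ≠ 0), hsgn]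
      norm_num
    · have hsgn : (-1:ℝ) ^ N = -1 := hpar.neg_one_zpow
      rw [hsgn]
      have : (2:ℝ)^j * t + -1 = (2:ℝ)^j * t + ((-1:ℤ):ℝ) := by norm_num
      rw [this, Int.floor_add_intCast, ← hN, zpow_add₀ (by norm_num : (-1:ℝ) ≠ 0), hsgn]
      norm_num
  · -- j > d : even shift, unchanged
    obtain ⟨q, rfl⟩ : ∃ q, j = d + q := ⟨j - d, by omega⟩
    have hq : 1 ≤ q := by omega
    have hqe : Even ((2:ℤ) ^ q) := by
      obtain ⟨q', rfl⟩ : ∃ q', q = q' + 1 := ⟨q - 1, by omega⟩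
      exact ⟨2 ^ q', by ring⟩
    set N : ℤ := ⌊(2:ℝ)^d * t⌋ with hN
    rcases Int.even_or_odd N with hpar | hpar
    · have hsgn : (-1:ℝ) ^ N = 1 := hpar.neg_one_zpow
      have hx : (2:ℝ) ^ (d+q) * flip d t = (2:ℝ)^(d+q) * t + (((2:ℤ)^q : ℤ):ℝ) := by
        rw [flip, ← hN, hsgn]
        push_cast
        rw [pow_add]
        field_simp
      rw [hx, Int.floor_add_intCast, if_neg (by omega),
        zpow_add₀ (by norm_num : (-1:ℝ) ≠ 0), hqe.neg_one_zpow]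
      norm_num
    · have hsgn : (-1:ℝ) ^ N = -1 := hpar.neg_one_zpow
      have hx : (2:ℝ) ^ (d+q) * flip d t = (2:ℝ)^(d+q) * t + ((-(2:ℤ)^q : ℤ):ℝ) := by
        rw [flip, ← hN, hsgn]
        push_cast
        rw [pow_add]
        field_simp
      rw [hx, Int.floor_add_intCast, if_neg (by omega),
        zpow_add₀ (by norm_num : (-1:ℝ) ≠ 0), (hqe.neg).neg_one_zpow]
      norm_num

lemma rademacher_flip {d : ℕ} (hd : 1 ≤ d) (k : ℕ) (t : ℝ) :
    rademacher k (flip d t) = (if k = d + 1 then -1 else 1) * rademacher k t := by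
  have h := floor_pow_flip hd (k - 1) t
  rw [rademacher, rademacher]
  by_cases hk : k = d + 1
  · rw [h, if_pos (by omega : k - 1 = d), if_pos hk]
  · rw [h, if_neg (by omega : ¬ k - 1 = d), if_neg hk]

end ChaosAux

namespace ChaosAux

lemma measurable_rademacher (k : ℕ) : Measurable (rademacher k) := by
  unfold rademacher
  exact measurable_from_top.comp ((measurable_id.const_mul ((2:ℝ)^(k-1))).floor)

lemma measurable_flip (d : ℕ) : Measurable (flip d) := by
  unfold flip
  exact measurable_id.add
    ((measurable_from_top.comp ((measurable_id.const_mul ((2:ℝ)^d)).floor)).mul_const _)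

lemma flip_of_even {d : ℕ} {t : ℝ} (ht : Even ⌊(2:ℝ)^d * t⌋) :
    flip d t = t + ((2:ℝ)^d)⁻¹ := by rw [flip, ht.neg_one_zpow, one_mul]

lemma flip_of_odd {d : ℕ} {t : ℝ} (ht : Odd ⌊(2:ℝ)^d * t⌋) :
    flip d t = t + -((2:ℝ)^d)⁻¹ := by rw [flip, ht.neg_one_zpow]; ring

lemma floor_add_inv (d : ℕ) (t : ℝ) :
    ⌊(2:ℝ)^d * (t + ((2:ℝ)^d)⁻¹)⌋ = ⌊(2:ℝ)^d * t⌋ + 1 := by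
  have h : (2:ℝ)^d * (t + ((2:ℝ)^d)⁻¹) = (2:ℝ)^d * t + ((1:ℤ):ℝ) := by
    rw [mul_add, mul_inv_cancel₀ (ne_of_gt (two_pow_pos d))]
    norm_num
  rw [h, Int.floor_add_intCast]

lemma shiftP {d : ℕ} (t : ℝ) :
    Even ⌊(2:ℝ)^d * (t + ((2:ℝ)^d)⁻¹)⌋ ↔ ¬ Even ⌊(2:ℝ)^d * t⌋ := by
  rw [floor_add_inv]
  simp [Int.even_add_one]

lemma shiftM {d : ℕ} (t : ℝ) :
    Even ⌊(2:ℝ)^d * (t + -((2:ℝ)^d)⁻¹)⌋ ↔ ¬ Even ⌊(2:ℝ)^d * t⌋ := by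
  have h := shiftP (d := d) (t + -((2:ℝ)^d)⁻¹)
  rw [show t + -((2:ℝ)^d)⁻¹ + ((2:ℝ)^d)⁻¹ = t by ring] at h
  tauto

lemma flip_flip {d : ℕ} (hd : 1 ≤ d) (t : ℝ) : flip d (flip d t) = t := by
  have h := floor_pow_flip hd d t
  rw [if_pos rfl] at h
  show flip d t + (-1:ℝ) ^ ⌊(2:ℝ)^d * flip d t⌋ * ((2:ℝ)^d)⁻¹ = t
  rw [h, flip]
  ring

lemma measurePreserving_flip_volume (d : ℕ) :
    MeasurePreserving (flip d) (volume : Measure ℝ) volume := by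
  refine ⟨measurable_flip d, ?_⟩
  ext S hS
  rw [Measure.map_apply (measurable_flip d) hS]
  set h : ℝ := ((2:ℝ)^d)⁻¹ with hh
  set A : Set ℝ := {t | Even ⌊(2:ℝ)^d * t⌋} with hA
  have hfl : Measurable fun t : ℝ => ⌊(2:ℝ)^d * t⌋ := (measurable_const_mul ((2:ℝ)^d)).floor
  have hAm : MeasurableSet A := hfl (show MeasurableSet {n : ℤ | Even n} from trivial)
  have hsplit : flip d ⁻¹' S =
      ((fun t => t + h) ⁻¹' (Aᶜ ∩ S)) ∪ ((fun t => t + -h) ⁻¹' (A ∩ S)) := by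
    ext t
    simp only [Set.mem_union, Set.mem_preimage, Set.mem_inter_iff, Set.mem_compl_iff,
      hA, Set.mem_setOf_eq]
    by_cases ht : Even ⌊(2:ℝ)^d * t⌋
    · have hf : flip d t = t + h := flip_of_even ht
      have h1 : ¬ Even ⌊(2:ℝ)^d * (t + h)⌋ := by rw [hh]; intro hc; exact ((shiftP t).1 hc) ht
      have h2 : ¬ Even ⌊(2:ℝ)^d * (t + -h)⌋ := by
        rw [hh]; intro hc; exact ((shiftM t).1 hc) ht
      rw [hf]
      tauto
    · have hf : flip d t = t + -h := flip_of_odd (Int.not_even_iff_odd.1 ht)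
      have h1 : Even ⌊(2:ℝ)^d * (t + h)⌋ := by
        rw [hh]; by_contra hc; exact hc (((shiftP t).2 ht))
      have h2 : Even ⌊(2:ℝ)^d * (t + -h)⌋ := by rw [hh]; exact (shiftM t).2 ht
      rw [hf]
      tauto
  rw [hsplit]
  have hT2 : MeasurableSet ((fun t => t + -h) ⁻¹' (A ∩ S)) :=
    (measurable_add_const (-h)) (hAm.inter hS)
  have hdisj : Disjoint ((fun t => t + h) ⁻¹' (Aᶜ ∩ S)) ((fun t => t + -h) ⁻¹' (A ∩ S)) := by
    rw [Set.disjoint_left]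
    intro t ht1 ht2
    have h1 : t + h ∈ Aᶜ := ht1.1
    have h2 : t + -h ∈ A := ht2.1
    simp only [hA, Set.mem_compl_iff, Set.mem_setOf_eq, hh] at h1 h2
    rw [shiftM] at h2
    rw [shiftP] at h1
    exact h1 h2
  rw [measure_union hdisj hT2]
  have hp1 : volume ((fun t : ℝ => t + h) ⁻¹' (Aᶜ ∩ S)) = volume (Aᶜ ∩ S) :=
    (measurePreserving_add_right volume h).measure_preimage (hAm.compl.inter hS).nullMeasurableSet
  have hp2 : volume ((fun t : ℝ => t + -h) ⁻¹' (A ∩ S)) = volume (A ∩ S) :=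
    (measurePreserving_add_right volume (-h)).measure_preimage (hAm.inter hS).nullMeasurableSet
  rw [hp1, hp2]
  rw [Set.inter_comm, Set.inter_comm A S, ← measure_inter_add_diff S hAm, Set.diff_eq,
    Set.inter_comm]
  rw [add_comm]

end ChaosAux

namespace ChaosAux

lemma flip_mem_Ico {d : ℕ} (hd : 1 ≤ d) {t : ℝ} (ht : t ∈ Set.Ico (0:ℝ) 1) :
    flip d t ∈ Set.Ico (0:ℝ) 1 := by
  obtain ⟨ht0, ht1⟩ := ht
  have hEpos := two_pow_pos d
  have hEne : ((2:ℝ)^d) ≠ 0 := ne_of_gt hEpos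
  have hinv : (0:ℝ) < ((2:ℝ)^d)⁻¹ := inv_pos.2 hEpos
  set N : ℤ := ⌊(2:ℝ)^d * t⌋ with hN
  have hN0 : 0 ≤ N := Int.floor_nonneg.2 (by positivity)
  have hNlt : N < 2 ^ d := by
    rw [hN]
    apply Int.floor_lt.2
    push_cast
    calc (2:ℝ)^d * t < 2^d * 1 := by exact mul_lt_mul_of_pos_left ht1 hEpos
      _ = 2^d := mul_one _
  have hNle : (N:ℝ) ≤ (2:ℝ)^d * t := Int.floor_le _
  have hNup : (2:ℝ)^d * t < (N:ℝ) + 1 := Int.lt_floor_add_one _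
  have heven : Even ((2:ℤ)^d) := by
    obtain ⟨d', rfl⟩ : ∃ d', d = d' + 1 := ⟨d - 1, by omega⟩
    exact ⟨2^d', by ring⟩
  rcases Int.even_or_odd N with hpar | hpar
  · rw [flip_of_even hpar]
    constructor
    · positivity
    · have h2 : N + 2 ≤ 2 ^ d := by
        rcases hpar with ⟨r, hr⟩; rcases heven with ⟨s, hs⟩; omega
      have h2' : ((N:ℝ) + 2) ≤ (2:ℝ)^d := by exact_mod_cast h2
      have : (2:ℝ)^d * (t + ((2:ℝ)^d)⁻¹) < (2:ℝ)^d * 1 := by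
        rw [mul_add, mul_inv_cancel₀ hEne, mul_one]
        linarith
      exact (mul_lt_mul_iff_right₀ hEpos).1 this
  · rw [flip_of_odd hpar]
    constructor
    · have h1 : 1 ≤ N := by rcases hpar with ⟨r, hr⟩; omega
      have h1' : (1:ℝ) ≤ (N:ℝ) := by exact_mod_cast h1
      have : (2:ℝ)^d * 0 ≤ (2:ℝ)^d * (t + -((2:ℝ)^d)⁻¹) := by
        rw [mul_add, mul_zero, mul_neg, mul_inv_cancel₀ hEne]
        linarith
      linarith [(mul_le_mul_iff_right₀ hEpos).1 this]
    · linarith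

lemma flip_preimage_Ico {d : ℕ} (hd : 1 ≤ d) :
    flip d ⁻¹' (Set.Ico (0:ℝ) 1) = Set.Ico (0:ℝ) 1 := by
  ext t
  constructor
  · intro h
    have := flip_mem_Ico hd h
    rwa [flip_flip hd] at this
  · exact fun h => flip_mem_Ico hd h

lemma measurePreserving_flip_lebI {d : ℕ} (hd : 1 ≤ d) :
    MeasurePreserving (flip d) lebI lebI := by
  have h0 := (measurePreserving_flip_volume d).restrict_preimage
    (measurableSet_Ico : MeasurableSet (Set.Ico (0:ℝ) 1))
  rw [flip_preimage_Ico hd] at h0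
  have hre : volume.restrict (Set.Ico (0:ℝ) 1) = lebI := by
    rw [lebI]; exact Measure.restrict_congr_set Ico_ae_eq_Icc
  rwa [hre] at h0

lemma eLpNorm_comp_flip {d : ℕ} (hd : 1 ≤ d) {f : ℝ → ℝ} (hf : Measurable f) (p : ℝ≥0∞) :
    eLpNorm (fun t => f (flip d t)) p lebI = eLpNorm f p lebI :=
  eLpNorm_comp_measurePreserving hf.aestronglyMeasurable (measurePreserving_flip_lebI hd)

end ChaosAux

namespace ChaosAux

noncomputable def W (s : Finset ℕ) (t : ℝ) : ℝ := ∏ k ∈ s, rademacher k t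

noncomputable def Wsum (C : Finset (Finset ℕ)) (c : Finset ℕ → ℝ) (t : ℝ) : ℝ :=
  ∑ s ∈ C, c s * W s t

lemma measurable_W (s : Finset ℕ) : Measurable (W s) :=
  Finset.measurable_prod s (fun k _ => measurable_rademacher k)

lemma measurable_Wsum (C : Finset (Finset ℕ)) (c : Finset ℕ → ℝ) : Measurable (Wsum C c) :=
  Finset.measurable_sum C (fun s _ => (measurable_const.mul (measurable_W s)))

lemma W_flip {d : ℕ} (hd : 1 ≤ d) (s : Finset ℕ) (t : ℝ) :
    W s (flip d t) = (if d + 1 ∈ s then -1 else 1) * W s t := by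
  unfold W
  calc (∏ k ∈ s, rademacher k (flip d t))
      = ∏ k ∈ s, ((if k = d + 1 then (-1:ℝ) else 1) * rademacher k t) := by
        exact Finset.prod_congr rfl (fun k _ => rademacher_flip hd k t)
    _ = (∏ k ∈ s, (if k = d + 1 then (-1:ℝ) else 1)) * ∏ k ∈ s, rademacher k t :=
        Finset.prod_mul_distrib
    _ = (if d + 1 ∈ s then -1 else 1) * ∏ k ∈ s, rademacher k t := by
        rw [Finset.prod_ite_eq' s (d+1) (fun _ => (-1:ℝ))]

lemma avg_kill_one {d : ℕ} (hd : 1 ≤ d) (C : Finset (Finset ℕ)) (c : Finset ℕ → ℝ) (t : ℝ) :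
    Wsum C (fun s => if d + 1 ∈ s then 0 else c s) t
      = (2:ℝ)⁻¹ * (Wsum C c t + Wsum C c (flip d t)) := by
  unfold Wsum
  rw [← Finset.sum_add_distrib, Finset.mul_sum]
  refine Finset.sum_congr rfl (fun s _ => ?_)
  rw [W_flip hd]
  by_cases h : d + 1 ∈ s
  · simp only [h, if_true]; ring
  · simp only [h, if_false]; ring

lemma nnnorm_half : (‖(2:ℝ)⁻¹‖₊ : ℝ≥0∞) = 2⁻¹ := by
  rw [nnnorm_inv]
  rw [ENNReal.coe_inv (by norm_num)]
  norm_num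

lemma eLpNorm_kill_one {p : ℝ≥0∞} (hp : 1 ≤ p) {d : ℕ} (hd : 1 ≤ d)
    (C : Finset (Finset ℕ)) (c : Finset ℕ → ℝ) :
    eLpNorm (Wsum C (fun s => if d + 1 ∈ s then 0 else c s)) p lebI
      ≤ eLpNorm (Wsum C c) p lebI := by
  have heq : Wsum C (fun s => if d + 1 ∈ s then 0 else c s)
      = (2:ℝ)⁻¹ • (Wsum C c + fun t => Wsum C c (flip d t)) := by
    funext t
    simp only [Pi.smul_apply, Pi.add_apply, smul_eq_mul]
    exact avg_kill_one hd C c t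
  rw [heq]
  have hm1 : AEStronglyMeasurable (Wsum C c) lebI := (measurable_Wsum C c).aestronglyMeasurable
  have hm2 : AEStronglyMeasurable (fun t => Wsum C c (flip d t)) lebI :=
    ((measurable_Wsum C c).comp (measurable_flip d)).aestronglyMeasurable
  calc eLpNorm ((2:ℝ)⁻¹ • (Wsum C c + fun t => Wsum C c (flip d t))) p lebI
      ≤ ‖(2:ℝ)⁻¹‖₊ • eLpNorm (Wsum C c + fun t => Wsum C c (flip d t)) p lebI :=
        eLpNorm_const_smul_le
    _ = 2⁻¹ * eLpNorm (Wsum C c + fun t => Wsum C c (flip d t)) p lebI := by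
        rw [ENNReal.smul_def, smul_eq_mul, nnnorm_half]
    _ ≤ 2⁻¹ * (eLpNorm (Wsum C c) p lebI + eLpNorm (fun t => Wsum C c (flip d t)) p lebI) :=
        mul_le_mul_right (eLpNorm_add_le hm1 hm2 hp) _
    _ = eLpNorm (Wsum C c) p lebI := by
        rw [eLpNorm_comp_flip hd (measurable_Wsum C c) p, ← two_mul, ← mul_assoc,
          ENNReal.inv_mul_cancel two_ne_zero ENNReal.ofNat_ne_top, one_mul]

lemma eLpNorm_kill_le {p : ℝ≥0∞} (hp : 1 ≤ p) (C : Finset (Finset ℕ)) (c : Finset ℕ → ℝ) :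
    ∀ L : Finset ℕ, (∀ l ∈ L, 2 ≤ l) →
    eLpNorm (Wsum C (fun s => if (s ∩ L).Nonempty then 0 else c s)) p lebI
      ≤ eLpNorm (Wsum C c) p lebI := by
  intro L
  induction L using Finset.induction_on with
  | empty =>
    intro _
    have hfe : (fun s : Finset ℕ => if (s ∩ (∅ : Finset ℕ)).Nonempty then (0:ℝ) else c s) = c := by
      funext s; simp
    rw [hfe]
  | @insert a L ha ih =>
    intro hL
    have ha2 : 2 ≤ a := hL a (Finset.mem_insert_self a L)
    set c' := fun s => if (s ∩ L).Nonempty then (0:ℝ) else c s with hc'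
    have h1 := eLpNorm_kill_one hp (show 1 ≤ a - 1 by omega) C c'
    have heq : (fun s => if a - 1 + 1 ∈ s then (0:ℝ) else c' s)
        = (fun s => if (s ∩ insert a L).Nonempty then (0:ℝ) else c s) := by
      funext s
      rw [show a - 1 + 1 = a by omega]
      have hiff : (s ∩ insert a L).Nonempty ↔ (a ∈ s ∨ (s ∩ L).Nonempty) := by
        constructor
        · rintro ⟨x, hx⟩
          rw [Finset.mem_inter, Finset.mem_insert] at hx
          rcases hx.2 with rfl | hxL
          · exact Or.inl hx.1
          · exact Or.inr ⟨x, Finset.mem_inter.2 ⟨hx.1, hxL⟩⟩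
        · rintro (hx | ⟨x, hx⟩)
          · exact ⟨a, Finset.mem_inter.2 ⟨hx, Finset.mem_insert_self a L⟩⟩
          · rw [Finset.mem_inter] at hx
            exact ⟨x, Finset.mem_inter.2 ⟨hx.1, Finset.mem_insert_of_mem hx.2⟩⟩
      by_cases h : a ∈ s
      · simp [hiff, h, hc']
      · by_cases h2 : (s ∩ L).Nonempty
        · simp [hiff, h, h2, hc']
        · simp [hiff, h, h2, hc']
    rw [heq] at h1
    exact le_trans h1 (ih (fun l hl => hL l (Finset.mem_insert_of_mem hl)))

end ChaosAux

namespace ChaosAux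

def toggle (J : ℕ) (s : Finset ℕ) : Finset ℕ := if J ∈ s then s.erase J else insert J s

lemma toggle_toggle (J : ℕ) (s : Finset ℕ) : toggle J (toggle J s) = s := by
  unfold toggle
  by_cases h : J ∈ s
  · rw [if_pos h, if_neg (Finset.notMem_erase J s), Finset.insert_erase h]
  · rw [if_neg h, if_pos (Finset.mem_insert_self J s), Finset.erase_insert h]

lemma toggle_subset {J R : ℕ} (hJ : J < R) {s : Finset ℕ} (hs : s ⊆ Finset.range R) :
    toggle J s ⊆ Finset.range R := by
  unfold toggle
  by_cases h : J ∈ s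
  · rw [if_pos h]; exact (Finset.erase_subset J s).trans hs
  · rw [if_neg h]
    intro x hx
    rcases Finset.mem_insert.1 hx with rfl | hxs
    · exact Finset.mem_range.2 hJ
    · exact hs hxs

lemma rademacher_sq (J : ℕ) (t : ℝ) : rademacher J t * rademacher J t = 1 := by
  rw [rademacher, ← zpow_add₀ (by norm_num : (-1:ℝ) ≠ 0)]
  exact Even.neg_one_zpow ⟨_, rfl⟩

lemma rademacher_abs (J : ℕ) (t : ℝ) : |rademacher J t| = 1 := by
  rw [rademacher]
  rcases Int.even_or_odd ⌊(2:ℝ)^(J-1) * t⌋ with h | h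
  · rw [h.neg_one_zpow]; norm_num
  · rw [h.neg_one_zpow]; norm_num

lemma rademacher_mul_W (J : ℕ) (s : Finset ℕ) (t : ℝ) :
    rademacher J t * W s t = W (toggle J s) t := by
  unfold toggle W
  by_cases h : J ∈ s
  · rw [if_pos h, ← Finset.mul_prod_erase s _ h, ← mul_assoc, rademacher_sq, one_mul]
  · rw [if_neg h, Finset.prod_insert h]

lemma rademacher_mul_Wsum {J R : ℕ} (hJ : J < R) (c : Finset ℕ → ℝ) (t : ℝ) :
    rademacher J t * Wsum ((Finset.range R).powerset) c t
      = Wsum ((Finset.range R).powerset) (fun s => c (toggle J s)) t := by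
  unfold Wsum
  rw [Finset.mul_sum]
  refine Finset.sum_nbij' (i := toggle J) (j := toggle J) ?_ ?_ ?_ ?_ ?_
  · intro s hs
    exact Finset.mem_powerset.2 (toggle_subset hJ (Finset.mem_powerset.1 hs))
  · intro s hs
    exact Finset.mem_powerset.2 (toggle_subset hJ (Finset.mem_powerset.1 hs))
  · intro s _; exact toggle_toggle J s
  · intro s _; exact toggle_toggle J s
  · intro s _
    rw [mul_left_comm, rademacher_mul_W]
    simp only [toggle_toggle]

lemma eLpNorm_rademacher_mul (J : ℕ) (g : ℝ → ℝ) (p : ℝ≥0∞) :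
    eLpNorm (fun t => rademacher J t * g t) p lebI = eLpNorm g p lebI := by
  rw [← eLpNorm_norm (f := fun t => rademacher J t * g t), ← eLpNorm_norm (f := g)]
  congr 1
  funext t
  rw [norm_mul]
  simp [Real.norm_eq_abs, rademacher_abs]

end ChaosAux

namespace ChaosAux

noncomputable def pairSet (k : ℕ) : Finset ℕ := {(pr k).1, (pr k).2}

noncomputable def cfun (a : ℕ → ℝ) (n : ℕ) : Finset ℕ → ℝ :=
  fun s => ∑ k ∈ (Finset.Icc 1 n).filter (fun k => pairSet k = s), a k

lemma pairSet_mem_powerset {k R : ℕ} (hk : 1 ≤ k) (hR : k + 2 ≤ R) :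
    pairSet k ∈ (Finset.range R).powerset := by
  obtain ⟨⟨h1, h2⟩, he⟩ := pr_spec hk
  have hj : (pr k).2 ≤ k + 1 := by
    have := snd_le (pr_spec hk).1
    omega
  rw [Finset.mem_powerset, pairSet]
  intro x hx
  rcases Finset.mem_insert.1 hx with rfl | hx
  · exact Finset.mem_range.2 (by omega)
  · rw [Finset.mem_singleton] at hx
    subst hx
    exact Finset.mem_range.2 (by omega)

lemma W_pairSet {k : ℕ} (hk : 1 ≤ k) (t : ℝ) :
    W (pairSet k) t = rademacher (pr k).1 t * rademacher (pr k).2 t := by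
  rw [pairSet, W]
  exact Finset.prod_pair (ne_of_lt (pr_spec hk).1.2)

lemma sum_eq_Wsum (a : ℕ → ℝ) (n R : ℕ) (hR : n + 2 ≤ R) :
    (fun t => ∑ k ∈ Finset.Icc 1 n, a k * chaosEnum k t)
      = Wsum ((Finset.range R).powerset) (cfun a n) := by
  funext t
  unfold Wsum cfun
  calc (∑ k ∈ Finset.Icc 1 n, a k * chaosEnum k t)
      = ∑ k ∈ Finset.Icc 1 n, a k * W (pairSet k) t := by
        refine Finset.sum_congr rfl (fun k hk => ?_)
        have hk1 : 1 ≤ k := (Finset.mem_Icc.1 hk).1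
        rw [chaosEnum_eq hk1, W_pairSet hk1]
    _ = ∑ s ∈ (Finset.range R).powerset,
          ∑ k ∈ (Finset.Icc 1 n).filter (fun k => pairSet k = s), a k * W (pairSet k) t := by
        refine (Finset.sum_fiberwise_of_maps_to (fun k hk => ?_) _).symm
        have hk1 : 1 ≤ k := (Finset.mem_Icc.1 hk).1
        have hk2 : k ≤ n := (Finset.mem_Icc.1 hk).2
        exact pairSet_mem_powerset hk1 (by omega)
    _ = ∑ s ∈ (Finset.range R).powerset,
          (∑ k ∈ (Finset.Icc 1 n).filter (fun k => pairSet k = s), a k) * W s t := by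
        refine Finset.sum_congr rfl (fun s _ => ?_)
        rw [Finset.sum_mul]
        refine Finset.sum_congr rfl (fun k hk => ?_)
        rw [(Finset.mem_filter.1 hk).2]

end ChaosAux
namespace ChaosAux

lemma mem_fil {n : ℕ} {s : Finset ℕ} {k : ℕ}
    (hk : k ∈ (Finset.Icc 1 n).filter (fun k => pairSet k = s)) :
    1 ≤ k ∧ k ≤ n ∧ goodPair (pr k) ∧ e (pr k) = k ∧ s = {(pr k).1, (pr k).2}
      ∧ (pr k).2 ≤ k + 1 := by
  obtain ⟨hk1, hk2⟩ := Finset.mem_filter.1 hk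
  obtain ⟨h1, h2⟩ := Finset.mem_Icc.1 hk1
  obtain ⟨hg, he⟩ := pr_spec h1
  refine ⟨h1, h2, hg, he, ?_, ?_⟩
  · rw [← hk2, pairSet]
  · have := snd_le hg; omega

lemma cfun_eq_of (a : ℕ → ℝ) {m n : ℕ} (hmn : m ≤ n) {s : Finset ℕ}
    (h : ∀ k, k ∈ (Finset.Icc 1 n).filter (fun k => pairSet k = s) → k ≤ m) :
    cfun a m s = cfun a n s := by
  unfold cfun
  apply Finset.sum_congr _ (fun _ _ => rfl)
  apply Finset.ext
  intro k
  simp only [Finset.mem_filter, Finset.mem_Icc]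
  constructor
  · rintro ⟨⟨hk1, hk2⟩, hk3⟩
    exact ⟨⟨hk1, by omega⟩, hk3⟩
  · rintro ⟨⟨hk1, hk2⟩, hk3⟩
    have := h k (Finset.mem_filter.2 ⟨Finset.mem_Icc.2 ⟨hk1, hk2⟩, hk3⟩)
    exact ⟨⟨hk1, this⟩, hk3⟩

lemma cfun_eq_zero (a : ℕ → ℝ) {m : ℕ} {s : Finset ℕ}
    (h : ∀ k, k ∈ (Finset.Icc 1 m).filter (fun k => pairSet k = s) → False) :
    cfun a m s = 0 := by
  unfold cfun
  rw [Finset.eq_empty_of_forall_notMem (fun k hk => h k hk), Finset.sum_empty]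

lemma coeff_identity (a : ℕ → ℝ) {m n i0 J : ℕ} (hmn : m ≤ n)
    (hi0 : 1 ≤ i0) (hiJ : i0 < J) (he : e (i0, J) = m) (s : Finset ℕ) :
    (if (s ∩ Finset.Icc J (n+1)).Nonempty then (0:ℝ) else cfun a n s)
      + (if ((toggle J s) ∩ Finset.Icc (i0+1) (n+1)).Nonempty then (0:ℝ)
          else cfun a n s - (if (s ∩ Finset.Icc J (n+1)).Nonempty then (0:ℝ) else cfun a n s))
      = cfun a m s := by
  have hgm : goodPair (i0, J) := ⟨hi0, hiJ⟩
  have hJ2 : 2 ≤ J := by omega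
  have hJn : J ≤ n + 1 := by
    have := snd_le hgm
    simp only at this
    omega
  by_cases h1 : (s ∩ Finset.Icc J (n+1)).Nonempty
  · rw [if_pos h1]
    obtain ⟨l, hl⟩ := h1
    obtain ⟨hls, hlJ⟩ := Finset.mem_inter.1 hl
    obtain ⟨hlJ1, hlJ2⟩ := Finset.mem_Icc.1 hlJ
    by_cases h2 : ((toggle J s) ∩ Finset.Icc (i0+1) (n+1)).Nonempty
    · rw [if_pos h2, add_zero]
      symm
      apply cfun_eq_zero
      intro k hk
      obtain ⟨hk1, hkm, hg, hek, hs, hj⟩ := mem_fil hk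
      set i := (pr k).1
      set j := (pr k).2
      -- order: k ≤ m
      have hkm' : e (pr k) ≤ e (i0, J) := by rw [hek, he]; exact hkm
      have hord := (e_le_iff hg hgm).1 hkm'
      simp only at hord
      -- l ∈ {i, j} and l ≥ J forces j = J, i ≤ i0
      have hlij : l = i ∨ l = j := by
        rw [hs] at hls
        rcases Finset.mem_insert.1 hls with h | h
        · exact Or.inl h
        · exact Or.inr (Finset.mem_singleton.1 h)
      have hij : i < j := hg.2
      have hjJ : j = J ∧ i ≤ i0 := by
        rcases hlij with rfl | rfl
        · rcases hord with h | h
          · omega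
          · exact ⟨h.1, h.2⟩
        · rcases hord with h | h
          · omega
          · exact ⟨h.1, h.2⟩
      -- toggle J s = {i}
      have hJs : J ∈ s := by rw [hs]; rw [← hjJ.1]; simp
      have htog : toggle J s = s.erase J := by rw [toggle, if_pos hJs]
      obtain ⟨x, hx⟩ := h2
      obtain ⟨hx1, hx2⟩ := Finset.mem_inter.1 hx
      rw [htog] at hx1
      have hxJ : x ≠ J := Finset.ne_of_mem_erase hx1
      have hxs : x ∈ s := Finset.mem_of_mem_erase hx1
      have hxij : x = i ∨ x = j := by
        rw [hs] at hxs
        rcases Finset.mem_insert.1 hxs with h | h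
        · exact Or.inl h
        · exact Or.inr (Finset.mem_singleton.1 h)
      obtain ⟨hx3, hx4⟩ := Finset.mem_Icc.1 hx2
      rcases hxij with rfl | rfl
      · omega
      · exact hxJ hjJ.1
    · rw [if_neg h2, sub_zero, zero_add]
      symm
      apply cfun_eq_of a hmn
      intro k hk
      obtain ⟨hk1, hkn, hg, hek, hs, hjk⟩ := mem_fil hk
      set i := (pr k).1
      set j := (pr k).2
      have hij : i < j := hg.2
      have hlij : l = i ∨ l = j := by
        rw [hs] at hls
        rcases Finset.mem_insert.1 hls with h | h
        · exact Or.inl h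
        · exact Or.inr (Finset.mem_singleton.1 h)
      have hjge : J ≤ j := by rcases hlij with rfl | rfl <;> omega
      have hjn1 : j ≤ n + 1 := by omega
      -- show j = J and i ≤ i0, hence k ≤ m
      by_cases hJs : J ∈ s
      · have htog : toggle J s = s.erase J := by rw [toggle, if_pos hJs]
        by_cases hjJ : j = J
        · -- i ∈ toggle, so i ≤ i0
          have hiJ' : i < J := by omega
          have hitog : i ∈ toggle J s := by
            rw [htog]
            exact Finset.mem_erase.2 ⟨by omega, by rw [hs]; simp⟩
          have hile : i ≤ i0 := by
            by_contra hcon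
            exact h2 ⟨i, Finset.mem_inter.2 ⟨hitog, Finset.mem_Icc.2 ⟨by omega, by omega⟩⟩⟩
          have : e (pr k) ≤ e (i0, J) := (e_le_iff hg hgm).2 (by
            simp only
            exact Or.inr ⟨hjJ, hile⟩)
          omega
        · -- then i = J and j > J, j ∈ toggle, contradiction
          have hiJ2 : i = J := by
            rw [hs] at hJs
            rcases Finset.mem_insert.1 hJs with h | h
            · omega
            · exact absurd (Finset.mem_singleton.1 h).symm hjJ
          have hjtog : j ∈ toggle J s := by
            rw [htog]
            exact Finset.mem_erase.2 ⟨by omega, by rw [hs]; simp⟩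
          exact absurd (h2 ⟨j, Finset.mem_inter.2 ⟨hjtog,
            Finset.mem_Icc.2 ⟨by omega, hjn1⟩⟩⟩) (fun x => x)
      · have htog : toggle J s = insert J s := by rw [toggle, if_neg hJs]
        have hjJ : j ≠ J := by
          intro hcon
          apply hJs
          rw [hs, ← hcon]
          simp
        have hjtog : j ∈ toggle J s := by
          rw [htog]
          exact Finset.mem_insert_of_mem (by rw [hs]; simp)
        exact absurd (h2 ⟨j, Finset.mem_inter.2 ⟨hjtog,
          Finset.mem_Icc.2 ⟨by omega, hjn1⟩⟩⟩) (fun x => x)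
  · rw [if_neg h1, sub_self]
    have hz : (if ((toggle J s) ∩ Finset.Icc (i0+1) (n+1)).Nonempty then (0:ℝ) else 0) = 0 := by
      split <;> rfl
    rw [hz, add_zero]
    symm
    apply cfun_eq_of a hmn
    intro k hk
    obtain ⟨hk1, hkn, hg, hek, hs, hjk⟩ := mem_fil hk
    set i := (pr k).1
    set j := (pr k).2
    have hjs : j ∈ s := by rw [hs]; simp
    have hjJ : j < J := by
      by_contra hcon
      exact h1 ⟨j, Finset.mem_inter.2 ⟨hjs, Finset.mem_Icc.2 ⟨by omega, by omega⟩⟩⟩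
    have := e_lt_e hg hgm (show (pr k).2 < (i0, J).2 from hjJ)
    omega

end ChaosAux
namespace ChaosAux

lemma Wsum_add (C : Finset (Finset ℕ)) (c1 c2 : Finset ℕ → ℝ) (t : ℝ) :
    Wsum C (fun s => c1 s + c2 s) t = Wsum C c1 t + Wsum C c2 t := by
  unfold Wsum
  rw [← Finset.sum_add_distrib]
  exact Finset.sum_congr rfl (fun s _ => add_mul _ _ _)

lemma Wsum_sub (C : Finset (Finset ℕ)) (c1 c2 : Finset ℕ → ℝ) (t : ℝ) :
    Wsum C (fun s => c1 s - c2 s) t = Wsum C c1 t - Wsum C c2 t := by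
  unfold Wsum
  rw [← Finset.sum_sub_distrib]
  exact Finset.sum_congr rfl (fun s _ => sub_mul _ _ _)

end ChaosAux

open ChaosAux

/-- The Rademacher chaos of order 2, ordered according to the enumeration `φ`,
satisfies the basic-sequence inequality in `L^p[0,1]`, for every `p ∈ [1,∞]`,
with the constant `K = 3` independent of `m`, `n` and the coefficients. -/
theorem chaos_basic_sequence (p : ℝ≥0∞) (hp : 1 ≤ p)
    (m n : ℕ) (hmn : m ≤ n) (a : ℕ → ℝ) :
    eLpNorm (fun t => ∑ i ∈ Finset.Icc 1 m, a i * chaosEnum i t) p lebI ≤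
      3 * eLpNorm (fun t => ∑ i ∈ Finset.Icc 1 n, a i * chaosEnum i t) p lebI := by
  by_cases hm : 1 ≤ m
  swap
  · have hm0 : m = 0 := by omega
    subst hm0
    simp only [show Finset.Icc 1 0 = (∅ : Finset ℕ) by rfl, Finset.sum_empty]
    rw [eLpNorm_zero']
    exact zero_le
  -- setup
  obtain ⟨hg, hem⟩ := pr_spec hm
  set i0 : ℕ := (pr m).1 with hi0def
  set J : ℕ := (pr m).2 with hJdef
  have hi0 : 1 ≤ i0 := hg.1
  have hiJ : i0 < J := hg.2
  have hJn : J ≤ n + 1 := by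
    have := snd_le hg
    omega
  have hem' : e (i0, J) = m := hem
  set R : ℕ := n + 2 with hR
  set C : Finset (Finset ℕ) := (Finset.range R).powerset with hC
  set c : Finset ℕ → ℝ := cfun a n with hc
  set L1 : Finset ℕ := Finset.Icc J (n+1) with hL1
  set L2 : Finset ℕ := Finset.Icc (i0+1) (n+1) with hL2
  set cQ : Finset ℕ → ℝ := fun s => if (s ∩ L1).Nonempty then 0 else c s with hcQ
  set cg : Finset ℕ → ℝ := fun s => c s - cQ s with hcg
  set cw : Finset ℕ → ℝ := fun s => cg (toggle J s) with hcw
  set cv : Finset ℕ → ℝ := fun s => if (s ∩ L2).Nonempty then 0 else cw s with hcv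
  have hJR : J < R := by omega
  have hfn : (fun t => ∑ k ∈ Finset.Icc 1 n, a k * chaosEnum k t) = Wsum C c :=
    sum_eq_Wsum a n R (by omega)
  have hfm : (fun t => ∑ k ∈ Finset.Icc 1 m, a k * chaosEnum k t) = Wsum C (cfun a m) :=
    sum_eq_Wsum a m R (by omega)
  have hid : cfun a m = fun s => cQ s + cv (toggle J s) := by
    funext s
    have h := coeff_identity a hmn hi0 hiJ hem' s
    simp only [hcQ, hcv, hcw, hcg, hc, toggle_toggle, hL1, hL2]
    exact h.symm
  -- measurability helpers
  have hmQ : AEStronglyMeasurable (Wsum C cQ) lebI := (measurable_Wsum C cQ).aestronglyMeasurable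
  have hmv : AEStronglyMeasurable (fun t => rademacher J t * Wsum C cv t) lebI :=
    ((measurable_rademacher J).mul (measurable_Wsum C cv)).aestronglyMeasurable
  -- decomposition of the m-th partial sum
  have hsm : (fun t => ∑ k ∈ Finset.Icc 1 m, a k * chaosEnum k t)
      = fun t => Wsum C cQ t + rademacher J t * Wsum C cv t := by
    rw [hfm, hid]
    funext t
    rw [Wsum_add C cQ (fun s => cv (toggle J s)) t, rademacher_mul_Wsum hJR cv t]
  -- norm estimates
  have h1 : eLpNorm (Wsum C cQ) p lebI ≤ eLpNorm (Wsum C c) p lebI := by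
    rw [hcQ]
    exact eLpNorm_kill_le hp C c L1 (fun l hl => by
      rw [hL1] at hl
      have := Finset.mem_Icc.1 hl
      omega)
  have h2 : eLpNorm (Wsum C cv) p lebI ≤ eLpNorm (Wsum C cw) p lebI := by
    rw [hcv]
    exact eLpNorm_kill_le hp C cw L2 (fun l hl => by
      rw [hL2] at hl
      have := Finset.mem_Icc.1 hl
      omega)
  have h3 : eLpNorm (Wsum C cw) p lebI = eLpNorm (Wsum C cg) p lebI := by
    have hwr : Wsum C cw = fun t => rademacher J t * Wsum C cg t := by
      rw [hcw]
      funext t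
      exact (rademacher_mul_Wsum hJR cg t).symm
    rw [hwr, eLpNorm_rademacher_mul]
  have h4 : eLpNorm (Wsum C cg) p lebI
      ≤ eLpNorm (Wsum C c) p lebI + eLpNorm (Wsum C cQ) p lebI := by
    have hgr : Wsum C cg = fun t => Wsum C c t - Wsum C cQ t := by
      rw [hcg]
      funext t
      exact Wsum_sub C c cQ t
    rw [hgr]
    exact eLpNorm_sub_le (measurable_Wsum C c).aestronglyMeasurable
      (measurable_Wsum C cQ).aestronglyMeasurable hp
  rw [hfn, hsm]
  calc eLpNorm (fun t => Wsum C cQ t + rademacher J t * Wsum C cv t) p lebI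
      ≤ eLpNorm (Wsum C cQ) p lebI
          + eLpNorm (fun t => rademacher J t * Wsum C cv t) p lebI :=
        eLpNorm_add_le hmQ hmv hp
    _ = eLpNorm (Wsum C cQ) p lebI + eLpNorm (Wsum C cv) p lebI := by
        rw [eLpNorm_rademacher_mul]
    _ ≤ eLpNorm (Wsum C c) p lebI
          + (eLpNorm (Wsum C c) p lebI + eLpNorm (Wsum C cQ) p lebI) := by
        refine add_le_add h1 (le_trans h2 ?_)
        rw [h3]
        exact h4
    _ ≤ eLpNorm (Wsum C c) p lebI
          + (eLpNorm (Wsum C c) p lebI + eLpNorm (Wsum C c) p lebI) := by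
        exact add_le_add_right (add_le_add_right h1 _) _
    _ = 3 * eLpNorm (Wsum C c) p lebI := by ring
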